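/- Let n ≥ 1, L > 0, μ ≤ 0, and let f : ℝⁿ → ℝ belong to F_{μ,L}. Let x⋆ be the unique global minimizer of f, with f⋆ = f(x⋆), and let X ⊆ ℝⁿ. Suppose ⟨∇f(x), x − x⋆⟩ ≥ μ_g ‖x − x⋆‖² for all x ∈ X, for some μ_g > 0 (quadratic gradient growth). Then for every ℓ > max(L/2, μ_g) and every x ∈ X, one has f(x) + (ℓ/μ_g)⟨∇f(x), x⋆ − x⟩ + (ℓ − L/2)‖x⋆ − x‖² ≤ f⋆; that is, f is (γ, μ_s)-quasar-convex on X with respect to x⋆ with γ = μ_g/ℓ and μ_s = 2ℓ − L. -/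

import Mathlib

open Set
open scoped RealInnerProductSpace

/-- First-order condition for a convex differentiable function. -/
lemma grad_ineq_aux {n : ℕ} (g : EuclideanSpace ℝ (Fin n) → ℝ)
    (g' : EuclideanSpace ℝ (Fin n))
    (x y : EuclideanSpace ℝ (Fin n))
    (hg : HasGradientAt g g' x)
    (hc : ConvexOn ℝ univ g) :
    g x + ⟪g', y - x⟫ ≤ g y := by
  set φ : ℝ → ℝ := fun t => g (x + t • (y - x)) with hφdef
  have hline : ∀ t : ℝ, HasDerivAt (fun s : ℝ => x + s • (y - x)) (y - x) t := by
    intro t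
    simpa using ((hasDerivAt_id t).smul_const (y - x)).const_add x
  have hφd : HasDerivAt φ ⟪g', y - x⟫ 0 := by
    have hfd : HasFDerivAt g (InnerProductSpace.toDual ℝ _ g') (x + (0:ℝ) • (y - x)) := by
      simpa using hasGradientAt_iff_hasFDerivAt.mp hg
    have := hfd.comp_hasDerivAt 0 (hline 0)
    exact this
  have hφc : ConvexOn ℝ univ φ := by
    have heq : φ = g ∘ (AffineMap.lineMap x y : ℝ →ᵃ[ℝ] _) := by
      funext t
      simp [hφdef, AffineMap.lineMap_apply, add_comm]
    rw [heq]
    simpa using hc.comp_affineMap (AffineMap.lineMap x y : ℝ →ᵃ[ℝ] _)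
  have hs := hφc.le_slope_of_hasDerivAt (mem_univ (0:ℝ)) (mem_univ (1:ℝ))
    zero_lt_one hφd
  have hφ0 : φ 0 = g x := by simp [hφdef]
  have hφ1 : φ 1 = g y := by simp [hφdef]
  rw [slope_def_field, hφ0, hφ1, sub_zero, div_one] at hs
  linarith [hs]

theorem stmt_16 (n : ℕ) (hn : 1 ≤ n)
    (f : EuclideanSpace ℝ (Fin n) → ℝ)
    (f' : EuclideanSpace ℝ (Fin n) → EuclideanSpace ℝ (Fin n))
    (L μ : ℝ) (hL : 0 < L) (hμ : μ ≤ 0)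
    (hgrad : ∀ x, HasGradientAt f (f' x) x)
    (hupper : ConvexOn ℝ univ (fun x => L / 2 * ‖x‖ ^ 2 - f x))
    (hlower : ConvexOn ℝ univ (fun x => f x - μ / 2 * ‖x‖ ^ 2))
    (xstar : EuclideanSpace ℝ (Fin n)) (hmin : ∀ z, f xstar ≤ f z)
    (huniq : ∀ y, (∀ z, f y ≤ f z) → y = xstar)
    (X : Set (EuclideanSpace ℝ (Fin n)))
    (μg : ℝ) (hμg : 0 < μg)
    (hQG : ∀ x ∈ X, μg * ‖x - xstar‖ ^ 2 ≤ ⟪f' x, x - xstar⟫) :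
    ∀ ℓ : ℝ, max (L / 2) μg < ℓ → ∀ x ∈ X,
      f x + (ℓ / μg) * ⟪f' x, xstar - x⟫ + (ℓ - L / 2) * ‖xstar - x‖ ^ 2 ≤
        f xstar := by
  intro ℓ hℓ x hx
  -- gradient at minimizer is zero
  have hfstar0 : f' xstar = 0 := by
    have hloc : IsLocalMin f xstar := Filter.Eventually.of_forall hmin
    have := (hloc).hasFDerivAt_eq_zero (hasGradientAt_iff_hasFDerivAt.mp (hgrad xstar))
    have h2 : (InnerProductSpace.toDual ℝ _ (f' xstar)) = 0 := this
    simpa using congrArg (InnerProductSpace.toDual ℝ _).symm h2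
  -- gradient of g := L/2‖·‖² - f at xstar is L • xstar - f' xstar = L • xstar
  have hgsq : ∀ z : EuclideanSpace ℝ (Fin n),
      HasGradientAt (fun w => L / 2 * ‖w‖ ^ 2 - f w) ((L : ℝ) • z - f' z) z := by
    intro z
    rw [hasGradientAt_iff_hasFDerivAt]
    have h1 : HasFDerivAt (fun w : EuclideanSpace ℝ (Fin n) => L / 2 * ‖w‖ ^ 2)
        (InnerProductSpace.toDual ℝ _ ((L : ℝ) • z)) z := by
      have hsq : HasFDerivAt (fun w : EuclideanSpace ℝ (Fin n) => ⟪w, w⟫)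
          ((innerSL ℝ z) + (innerSL ℝ z)) z := by
        have := (hasFDerivAt_id z).inner ℝ (hasFDerivAt_id z)
        convert this using 1
        · rfl
        · rfl
        · rfl
        · rfl
        ext w
        simp only [ContinuousLinearMap.add_apply, innerSL_apply_apply,
          ContinuousLinearMap.comp_apply, ContinuousLinearMap.prod_apply,
          ContinuousLinearMap.id_apply, fderivInnerCLM_apply, id]
        rw [real_inner_comm w z]
      have := hsq.const_smul (L / 2)
      have heq : (fun w : EuclideanSpace ℝ (Fin n) => L / 2 * ‖w‖ ^ 2)
          = fun w => (L / 2) • ⟪w, w⟫ := by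
        funext w; rw [real_inner_self_eq_norm_sq]; simp
      rw [heq]
      convert this using 1
      case e'_8 => rfl
      case e'_9 => rfl
      case e'_11 => rfl
      case e'_4 => rfl
      ext w
      simp only [InnerProductSpace.toDual_apply_apply, real_inner_smul_left,
        ContinuousLinearMap.smul_apply, ContinuousLinearMap.add_apply,
        innerSL_apply_apply, smul_eq_mul]
      ring
    have h2 := h1.sub (hasGradientAt_iff_hasFDerivAt.mp (hgrad z))
    convert h2 using 1
    · rfl
    · rfl
    · rfl
    rw [map_sub]
  -- first-order inequality for g at xstar evaluated at x
  have hkey := grad_ineq_aux (fun w => L / 2 * ‖w‖ ^ 2 - f w)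
    ((L : ℝ) • xstar - f' xstar) xstar x (hgsq xstar) hupper
  rw [hfstar0, sub_zero] at hkey
  -- hkey : L/2‖xstar‖² - f xstar + ⟪L•xstar, x - xstar⟫ ≤ L/2‖x‖² - f x
  have hexp : ⟪(L : ℝ) • xstar, x - xstar⟫ = L * (⟪xstar, x⟫ - ‖xstar‖ ^ 2) := by
    rw [real_inner_smul_left, inner_sub_right, real_inner_self_eq_norm_sq]
  have hnorm : ‖x - xstar‖ ^ 2 = ‖x‖ ^ 2 - 2 * ⟪xstar, x⟫ + ‖xstar‖ ^ 2 := by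
    rw [← real_inner_self_eq_norm_sq, ← real_inner_self_eq_norm_sq,
      ← real_inner_self_eq_norm_sq, inner_sub_left, inner_sub_right, inner_sub_right,
      real_inner_comm x xstar]
    ring
  -- so f x - f xstar ≤ L/2 ‖x - xstar‖²
  have hsmooth : f x - f xstar ≤ L / 2 * ‖x - xstar‖ ^ 2 := by
    rw [hnorm]; rw [hexp] at hkey; nlinarith
  have hI := hQG x hx
  have hnorm2 : ‖xstar - x‖ = ‖x - xstar‖ := norm_sub_rev _ _
  have hinner2 : ⟪f' x, xstar - x⟫ = -⟪f' x, x - xstar⟫ := by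
    rw [← inner_neg_right]; congr 1; abel
  rw [hnorm2, hinner2]
  have hℓL : L / 2 < ℓ := lt_of_le_of_lt (le_max_left _ _) hℓ
  have hℓμ : μg < ℓ := lt_of_le_of_lt (le_max_right _ _) hℓ
  have hℓpos : 0 < ℓ := lt_trans hμg hℓμ
  have hdiv : ℓ / μg * ⟪f' x, x - xstar⟫ ≥ ℓ * ‖x - xstar‖ ^ 2 := by
    have h1 : ℓ / μg * (μg * ‖x - xstar‖ ^ 2) ≤ ℓ / μg * ⟪f' x, x - xstar⟫ := by
      apply mul_le_mul_of_nonneg_left hI (le_of_lt (div_pos hℓpos hμg))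
    calc ℓ * ‖x - xstar‖ ^ 2 = ℓ / μg * (μg * ‖x - xstar‖ ^ 2) := by
          field_simp
      _ ≤ _ := h1
  nlinarith [hdiv, hsmooth]
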